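/- Let {φ_τ}_{τ=1}^{k-1} ⊂ ℝ^d be any vectors and {η_τ}_{τ=1}^{k-1} ⊂ ℝ be scalars with |η_τ| ≤ ζ for all τ. Let λ > 0 and define U_k = λI + Σ_{τ=1}^{k-1} φ_τ φ_τᵀ. Then ‖Σ_{τ=1}^{k-1} η_τ φ_τ‖_{U_k^{-1}} ≤ ζ √k. -/

import Mathlib

open Matrix Finset

lemma sum_mulVec' {d : ℕ} (S : Finset ℕ) (M : ℕ → Matrix (Fin d) (Fin d) ℝ)
    (z : Fin d → ℝ) : (∑ τ ∈ S, M τ) *ᵥ z = ∑ τ ∈ S, M τ *ᵥ z := by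
  ext i
  simp [Matrix.mulVec, dotProduct, Finset.sum_apply, Matrix.sum_apply,
    Finset.sum_mul]
  rw [Finset.sum_comm]

lemma dotProduct_sum' {d : ℕ} (S : Finset ℕ) (z : Fin d → ℝ) (f : ℕ → Fin d → ℝ) :
    z ⬝ᵥ (∑ τ ∈ S, f τ) = ∑ τ ∈ S, z ⬝ᵥ f τ := by
  simp [dotProduct, Finset.sum_apply, Finset.mul_sum]
  rw [Finset.sum_comm]

lemma vecMulVec_mulVec' {d : ℕ} (u v z : Fin d → ℝ) :
    Matrix.vecMulVec u v *ᵥ z = (v ⬝ᵥ z) • u := by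
  ext i
  simp [Matrix.mulVec, Matrix.vecMulVec_apply, dotProduct, Finset.mul_sum,
    mul_comm, mul_left_comm, mul_assoc]

theorem stmt1 (d k : ℕ) (hd : 1 ≤ d) (lam ζ : ℝ) (hlam : 0 < lam) (hζ : 0 ≤ ζ)
    (φ : ℕ → Fin d → ℝ) (η : ℕ → ℝ)
    (hη : ∀ τ ∈ Finset.Icc 1 (k - 1), |η τ| ≤ ζ)
    (U : Matrix (Fin d) (Fin d) ℝ)
    (hU : U = lam • (1 : Matrix (Fin d) (Fin d) ℝ) +
      ∑ τ ∈ Finset.Icc 1 (k - 1), Matrix.vecMulVec (φ τ) (φ τ))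
    (x : Fin d → ℝ)
    (hx : x = ∑ τ ∈ Finset.Icc 1 (k - 1), η τ • φ τ) :
    Real.sqrt (x ⬝ᵥ U⁻¹ *ᵥ x) ≤ ζ * Real.sqrt k := by
  set S := Finset.Icc 1 (k - 1) with hS
  have hUv : ∀ z : Fin d → ℝ, U *ᵥ z = lam • z + ∑ τ ∈ S, (φ τ ⬝ᵥ z) • φ τ := by
    intro z
    rw [hU, Matrix.add_mulVec, sum_mulVec']
    congr 1
    · rw [Matrix.smul_mulVec, Matrix.one_mulVec]
    · exact Finset.sum_congr rfl fun τ _ => vecMulVec_mulVec' _ _ _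
  have hquad : ∀ z : Fin d → ℝ,
      z ⬝ᵥ U *ᵥ z = lam * (z ⬝ᵥ z) + ∑ τ ∈ S, (φ τ ⬝ᵥ z) ^ 2 := by
    intro z
    rw [hUv, dotProduct_add, dotProduct_smul, smul_eq_mul]
    congr 1
    rw [dotProduct_sum']
    exact Finset.sum_congr rfl fun τ _ => by
      rw [dotProduct_smul, smul_eq_mul, dotProduct_comm, sq]
  have hPD : U.PosDef := by
    rw [Matrix.posDef_iff_dotProduct_mulVec]
    constructor
    · rw [Matrix.IsHermitian, hU]
      ext i j
      simp [Matrix.conjTranspose_apply, Matrix.add_apply, Matrix.sum_apply,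
        Matrix.smul_apply, Matrix.one_apply, Matrix.vecMulVec_apply, mul_comm, eq_comm]
    · intro z hz
      have hzz : 0 < z ⬝ᵥ z := by
        rw [show (z ⬝ᵥ z) = ∑ i, z i ^ 2 by simp [dotProduct, sq]]
        rcases Function.ne_iff.mp hz with ⟨i, hi⟩
        exact Finset.sum_pos' (fun i _ => sq_nonneg _)
          ⟨i, Finset.mem_univ i, sq_pos_of_ne_zero hi⟩
      simp only [star_trivial]
      rw [hquad z]
      have h2 : 0 ≤ ∑ τ ∈ S, (φ τ ⬝ᵥ z) ^ 2 :=
        Finset.sum_nonneg fun τ _ => sq_nonneg _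
      nlinarith
  have hdet : IsUnit U.det := hPD.det_pos.ne'.isUnit
  set y : Fin d → ℝ := U⁻¹ *ᵥ x with hy
  have hUy : U *ᵥ y = x := by
    rw [hy, Matrix.mulVec_mulVec, Matrix.mul_nonsing_inv U hdet, Matrix.one_mulVec]
  set s : ℝ := x ⬝ᵥ U⁻¹ *ᵥ x with hsdef
  have hs1 : s = y ⬝ᵥ U *ᵥ y := by
    rw [hUy, hsdef, ← hy, dotProduct_comm]
  have hs2 : s = lam * (y ⬝ᵥ y) + ∑ τ ∈ S, (φ τ ⬝ᵥ y) ^ 2 := by rw [hs1, hquad]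
  have hyy : 0 ≤ y ⬝ᵥ y := by
    rw [show (y ⬝ᵥ y) = ∑ i, y i ^ 2 by simp [dotProduct, sq]]
    exact Finset.sum_nonneg fun i _ => sq_nonneg _
  have hsq_nonneg : 0 ≤ ∑ τ ∈ S, (φ τ ⬝ᵥ y) ^ 2 :=
    Finset.sum_nonneg fun τ _ => sq_nonneg _
  have hs_nonneg : 0 ≤ s := by rw [hs2]; nlinarith [mul_nonneg hlam.le hyy]
  have hsum_sq : ∑ τ ∈ S, (φ τ ⬝ᵥ y) ^ 2 ≤ s := by
    rw [hs2]; nlinarith [mul_nonneg hlam.le hyy]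
  have hs3 : s = ∑ τ ∈ S, η τ * (φ τ ⬝ᵥ y) := by
    rw [hsdef, ← hy, dotProduct_comm, hx, dotProduct_sum']
    exact Finset.sum_congr rfl fun τ _ => by
      rw [dotProduct_smul, smul_eq_mul, dotProduct_comm]
  have hb1 : s ≤ ζ * ∑ τ ∈ S, |φ τ ⬝ᵥ y| := by
    rw [hs3, Finset.mul_sum]
    refine Finset.sum_le_sum fun τ hτ => ?_
    calc η τ * (φ τ ⬝ᵥ y) ≤ |η τ * (φ τ ⬝ᵥ y)| := le_abs_self _
    _ = |η τ| * |φ τ ⬝ᵥ y| := abs_mul _ _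
    _ ≤ ζ * |φ τ ⬝ᵥ y| := mul_le_mul_of_nonneg_right (hη τ hτ) (abs_nonneg _)
  have hcs : (∑ τ ∈ S, |φ τ ⬝ᵥ y|) ^ 2 ≤ (k : ℝ) * s := by
    have h := Finset.sum_mul_sq_le_sq_mul_sq S (fun _ => (1 : ℝ)) (fun τ => |φ τ ⬝ᵥ y|)
    simp only [one_mul, one_pow, sq_abs] at h
    have hcard : (S.card : ℝ) ≤ k := by
      rw [hS, Nat.card_Icc]
      exact_mod_cast (by omega : k - 1 + 1 - 1 ≤ k)
    calc (∑ τ ∈ S, |φ τ ⬝ᵥ y|) ^ 2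
        ≤ (S.card : ℝ) * ∑ τ ∈ S, (φ τ ⬝ᵥ y) ^ 2 := by simpa using h
      _ ≤ (k : ℝ) * s := mul_le_mul hcard hsum_sq hsq_nonneg (Nat.cast_nonneg k)
  have hb2 : ∑ τ ∈ S, |φ τ ⬝ᵥ y| ≤ Real.sqrt ((k : ℝ) * s) :=
    Real.le_sqrt_of_sq_le hcs
  have key : s ≤ ζ * Real.sqrt k * Real.sqrt s := by
    calc s ≤ ζ * ∑ τ ∈ S, |φ τ ⬝ᵥ y| := hb1
    _ ≤ ζ * Real.sqrt ((k : ℝ) * s) := mul_le_mul_of_nonneg_left hb2 hζ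
    _ = ζ * Real.sqrt k * Real.sqrt s := by
        rw [Real.sqrt_mul (Nat.cast_nonneg k), mul_assoc]
  rcases eq_or_lt_of_le hs_nonneg with h0 | h0
  · rw [← h0, Real.sqrt_zero]
    positivity
  · have hsqrt_pos : 0 < Real.sqrt s := Real.sqrt_pos.mpr h0
    have : Real.sqrt s * Real.sqrt s ≤ ζ * Real.sqrt k * Real.sqrt s := by
      rw [Real.mul_self_sqrt hs_nonneg]; exact key
    exact le_of_mul_le_mul_right this hsqrt_pos
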